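/- Every envy-free pairwise exchange mechanism weakly dominates the equal division mechanism: if φ^f is an envy-free pairwise exchange mechanism, then for every preference profile ≻ and every agent i, the allocation φ^f(≻)_i stochastically dominates the uniform allocation (assigning probability 1/n to every object) with respect to ≻_i. -/

import Mathlib

open Finset

/-- A preference over `n` objects, encoded by its rank function:
`r a` is the (0-based) rank of object `a`; object `a` is strictly preferred to `b`
iff `r a < r b`.  The `k`-th ranked object (0-based) is `r.symm k`. -/
abbrev Pref (n : ℕ) := Fin n ≃ Fin n

/-- The total probability that allocation `p` assigns to the upper contour set of `a`
(the objects weakly preferred to `a`) under preference `r`. -/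
def upperSum {n : ℕ} (r : Pref n) (p : Fin n → ℝ) (a : Fin n) : ℝ :=
  ∑ o ∈ Finset.univ.filter (fun o => r o ≤ r a), p o

/-- First-order stochastic dominance of `p` over `q` with respect to preference `r`. -/
def StochDom {n : ℕ} (r : Pref n) (p q : Fin n → ℝ) : Prop :=
  ∀ a : Fin n, upperSum r q a ≤ upperSum r p a

/-- A random assignment: a doubly stochastic matrix. -/
def IsRandomAssignment {n : ℕ} (P : Matrix (Fin n) (Fin n) ℝ) : Prop :=
  (∀ i a, 0 ≤ P i a) ∧ (∀ i, ∑ a, P i a = 1) ∧ (∀ a, ∑ i, P i a = 1)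

/-- A mechanism maps every preference profile to a random assignment. -/
def IsMechanism {n : ℕ} (φ : (Fin n → Pref n) → Matrix (Fin n) (Fin n) ℝ) : Prop :=
  ∀ prof, IsRandomAssignment (φ prof)

/-- Strategy-proofness: no agent can ever benefit (in the stochastic dominance sense)
from misreporting her preference. -/
def StrategyProof {n : ℕ} (φ : (Fin n → Pref n) → Matrix (Fin n) (Fin n) ℝ) : Prop :=
  ∀ (prof : Fin n → Pref n) (i : Fin n) (r' : Pref n),
    StochDom (prof i) (φ prof i) (φ (Function.update prof i r') i)

/-- Envy-freeness: each agent's allocation stochastically dominates every other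
agent's allocation with respect to her own preference. -/
def EnvyFree {n : ℕ} (φ : (Fin n → Pref n) → Matrix (Fin n) (Fin n) ℝ) : Prop :=
  ∀ (prof : Fin n → Pref n) (i j : Fin n), StochDom (prof i) (φ prof i) (φ prof j)

/-- The pairwise exchange mechanism induced by a transfer function `f`. -/
noncomputable def phiF {n : ℕ} (f : Pref n → Pref n → Fin n → ℝ) (prof : Fin n → Pref n) :
    Matrix (Fin n) (Fin n) ℝ :=
  fun i a => 1 / (n : ℝ) + ∑ j ∈ Finset.univ.erase i, f (prof i) (prof j) a

/-- The transfer function takes values in `[-1/n, 1/n]`. -/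
def TransferBounded {n : ℕ} (f : Pref n → Pref n → Fin n → ℝ) : Prop :=
  ∀ r r' a, -(1 / (n : ℝ)) ≤ f r r' a ∧ f r r' a ≤ 1 / (n : ℝ)

/-- Every envy-free pairwise exchange mechanism weakly dominates equal division:
each agent's allocation stochastically dominates the uniform allocation with respect
to her own preference. -/
theorem ef_pairwise_dominates_equal_division (n : ℕ) (hn : 3 ≤ n)
    (f : Pref n → Pref n → Fin n → ℝ) (hf : TransferBounded f)
    (hmech : IsMechanism (phiF f)) (hef : EnvyFree (phiF f)) :
    ∀ (prof : Fin n → Pref n) (i : Fin n),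
      StochDom (prof i) (phiF f prof i) (fun _ => 1 / (n : ℝ)) := by
  intro prof i a
  have hn0 : (0 : ℝ) < n := by
    have : 0 < n := by omega
    exact_mod_cast this
  set r := prof i with hr
  set U := Finset.univ.filter (fun o => r o ≤ r a) with hU
  have hsum : ∑ j : Fin n, upperSum r (phiF f prof j) a = (U.card : ℝ) := by
    unfold upperSum
    rw [show (∑ j : Fin n, ∑ o ∈ Finset.univ.filter (fun o => r o ≤ r a), phiF f prof j o) = ∑ o ∈ Finset.univ.filter (fun o => r o ≤ r a), ∑ j : Fin n, phiF f prof j o from Finset.sum_comm]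
    have hcol := (hmech prof).2.2
    simp only [← hU]
    rw [Finset.sum_congr rfl (fun o _ => hcol o)]
    simp
  have hle : ∀ j : Fin n, upperSum r (phiF f prof j) a ≤ upperSum r (phiF f prof i) a :=
    fun j => hef prof i j a
  have hbound : (U.card : ℝ) ≤ n * upperSum r (phiF f prof i) a := by
    rw [← hsum]
    calc ∑ j : Fin n, upperSum r (phiF f prof j) a
        ≤ ∑ _j : Fin n, upperSum r (phiF f prof i) a := Finset.sum_le_sum (fun j _ => hle j)
      _ = n * upperSum r (phiF f prof i) a := by simp [mul_comm]
  have huni : upperSum r (fun _ => 1 / (n : ℝ)) a = (U.card : ℝ) / n := by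
    unfold upperSum
    simp only [← hU, Finset.sum_const, nsmul_eq_mul]
    ring
  rw [huni]
  rw [div_le_iff₀ hn0] at *
  linarith
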